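/- The fixed-point set S = { X : L(X) ∧ X = X } of the Tarski Laplacian heat equation is closed under entrywise maximum: if X, Y ∈ S then X ∨ Y ∈ S. Consequently S is a max-plus subsemimodule of (ℝ_max^d)^N. -/

import Mathlib

open Finset

/-- Max-plus matrix-vector product (finite entries). -/
def maxPlus {m n : Type*} [Fintype n] [Nonempty n] (A : m → n → ℝ) (x : n → ℝ) : m → ℝ :=
  fun i => Finset.univ.sup' Finset.univ_nonempty (fun j => A i j + x j)

/-- Min-plus matrix-vector product (finite entries). -/
def minPlus {m n : Type*} [Fintype n] [Nonempty n] (A : m → n → ℝ) (x : n → ℝ) : m → ℝ :=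
  fun i => Finset.univ.inf' Finset.univ_nonempty (fun j => A i j + x j)

/-- Pseudoinverse (residual) of a matrix: [A^♯]_{j,i} = -A_{i,j}. -/
def sharp {m n : Type*} (A : m → n → ℝ) : n → m → ℝ := fun j i => - A i j

variable {V ι : Type*}

/-- The (weighted) tropical Tarski Laplacian:
L(X)_u = ⋀_{v ∈ N(u)} (W_{u,v} + A_{u,v}^♯ ⊞' (A_{v,u} ⊞ X_v)). -/
def tarskiL [Fintype V] [Fintype ι] [Nonempty ι]
    (E : V → V → Prop) [DecidableRel E]
    (hE : ∀ u : V, (Finset.univ.filter (E u)).Nonempty)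
    (W : V → V → ℝ) (A : V → V → ι → ι → ℝ) (X : V → ι → ℝ) : V → ι → ℝ :=
  fun u i => (Finset.univ.filter (E u)).inf' (hE u)
    (fun v => W u v + minPlus (sharp (A u v)) (maxPlus (A v u) (X v)) i)

/-- The heat-equation update map F(X) = L(X) ∧ X. -/
def heatF [Fintype V] [Fintype ι] [Nonempty ι]
    (E : V → V → Prop) [DecidableRel E]
    (hE : ∀ u : V, (Finset.univ.filter (E u)).Nonempty)
    (W : V → V → ℝ) (A : V → V → ι → ι → ℝ) (X : V → ι → ℝ) : V → ι → ℝ :=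
  fun u i => min (tarskiL E hE W A X u i) (X u i)

lemma inf'_mono_fun' {α β : Type*} [SemilatticeInf β] {s : Finset α} (hs : s.Nonempty)
    {f g : α → β} (h : ∀ a ∈ s, f a ≤ g a) : s.inf' hs f ≤ s.inf' hs g :=
  Finset.le_inf' hs g fun a ha => (Finset.inf'_le f ha).trans (h a ha)

lemma sup'_mono_fun' {α β : Type*} [SemilatticeSup β] {s : Finset α} (hs : s.Nonempty)
    {f g : α → β} (h : ∀ a ∈ s, f a ≤ g a) : s.sup' hs f ≤ s.sup' hs g :=
  Finset.sup'_le hs f fun a ha => (h a ha).trans (Finset.le_sup' g ha)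

lemma maxPlus_mono {m n : Type*} [Fintype n] [Nonempty n] (A : m → n → ℝ) {x y : n → ℝ}
    (h : ∀ j, x j ≤ y j) (i : m) : maxPlus A x i ≤ maxPlus A y i :=
  sup'_mono_fun' _ fun j _ => add_le_add (le_refl _) (h j)

lemma minPlus_mono {m n : Type*} [Fintype n] [Nonempty n] (A : m → n → ℝ) {x y : n → ℝ}
    (h : ∀ j, x j ≤ y j) (i : m) : minPlus A x i ≤ minPlus A y i :=
  inf'_mono_fun' _ fun j _ => add_le_add (le_refl _) (h j)

lemma tarskiL_mono [Fintype V] [Fintype ι] [Nonempty ι]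
    (E : V → V → Prop) [DecidableRel E]
    (hE : ∀ u : V, (Finset.univ.filter (E u)).Nonempty)
    (W : V → V → ℝ) (A : V → V → ι → ι → ℝ) {X Y : V → ι → ℝ}
    (h : ∀ u i, X u i ≤ Y u i) (u : V) (i : ι) :
    tarskiL E hE W A X u i ≤ tarskiL E hE W A Y u i :=
  inf'_mono_fun' _ fun v _ =>
    add_le_add (le_refl _) (minPlus_mono _ (maxPlus_mono _ (h v)) i)

lemma maxPlus_add {m n : Type*} [Fintype n] [Nonempty n] (A : m → n → ℝ) (x : n → ℝ)
    (α : ℝ) (i : m) : maxPlus A (fun j => x j + α) i = maxPlus A x i + α := by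
  unfold maxPlus
  rw [show (fun j => A i j + (x j + α)) = (fun j => (A i j + x j) + α) by funext j; ring]
  exact (Finset.comp_sup'_eq_sup'_comp _ (fun r : ℝ => r + α)
    (fun a b => (max_add_add_right a b α).symm)).symm

lemma minPlus_add {m n : Type*} [Fintype n] [Nonempty n] (A : m → n → ℝ) (x : n → ℝ)
    (α : ℝ) (i : m) : minPlus A (fun j => x j + α) i = minPlus A x i + α := by
  unfold minPlus
  rw [show (fun j => A i j + (x j + α)) = (fun j => (A i j + x j) + α) by funext j; ring]
  exact (Finset.apply_inf'_eq_inf'_comp _ (fun r : ℝ => r + α)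
    (fun a b => (min_add_add_right a b α).symm)).symm

/-- The fixed-point set S = {X : L(X) ∧ X = X} is closed under entrywise maximum
(together with closure under scalar translation, S is a max-plus subsemimodule). -/
theorem fixedPoints_sup_closed [Fintype V] [Fintype ι] [Nonempty ι]
    (E : V → V → Prop) [DecidableRel E]
    (hE : ∀ u : V, (Finset.univ.filter (E u)).Nonempty)
    (W : V → V → ℝ) (A : V → V → ι → ι → ℝ) (X Y : V → ι → ℝ)
    (hX : heatF E hE W A X = X) (hY : heatF E hE W A Y = Y) :
    (heatF E hE W A (fun u i => max (X u i) (Y u i)) = fun u i => max (X u i) (Y u i)) ∧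
      ∀ α : ℝ, heatF E hE W A (fun u i => X u i + α) = fun u i => X u i + α := by
  have hXle : ∀ u i, X u i ≤ tarskiL E hE W A X u i := by
    intro u i
    have h := congrFun (congrFun hX u) i
    simp only [heatF] at h
    by_contra hc
    push_neg at hc
    rw [min_eq_left hc.le] at h
    exact absurd h (ne_of_lt hc)
  have hYle : ∀ u i, Y u i ≤ tarskiL E hE W A Y u i := by
    intro u i
    have h := congrFun (congrFun hY u) i
    simp only [heatF] at h
    by_contra hc
    push_neg at hc
    rw [min_eq_left hc.le] at h
    exact absurd h (ne_of_lt hc)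
  constructor
  · funext u i
    simp only [heatF]
    refine min_eq_right (max_le ?_ ?_)
    · exact (hXle u i).trans (tarskiL_mono E hE W A (fun v j => le_max_left _ _) u i)
    · exact (hYle u i).trans (tarskiL_mono E hE W A (fun v j => le_max_right _ _) u i)
  · intro α
    have hL : ∀ u i, tarskiL E hE W A (fun u i => X u i + α) u i
        = tarskiL E hE W A X u i + α := by
      intro u i
      have key := Finset.apply_inf'_eq_inf'_comp (hE u) (fun r : ℝ => r + α)
        (f := fun v => W u v + minPlus (sharp (A u v)) (maxPlus (A v u) (X v)) i)
        (fun a b => (min_add_add_right a b α).symm)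
      unfold tarskiL
      rw [show ((Finset.univ.filter (E u)).inf' (hE u)
          (fun v => W u v + minPlus (sharp (A u v)) (maxPlus (A v u) (X v)) i)) + α
          = (Finset.univ.filter (E u)).inf' (hE u)
          ((fun r : ℝ => r + α) ∘
            fun v => W u v + minPlus (sharp (A u v)) (maxPlus (A v u) (X v)) i) from key]
      apply Finset.inf'_congr _ rfl
      intro v _
      simp only [Function.comp]
      rw [show maxPlus (A v u) (fun i => X v i + α) = fun i => maxPlus (A v u) (X v) i + α by
        funext j; exact maxPlus_add _ _ _ _]
      rw [minPlus_add]
      ring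
    funext u i
    simp only [heatF, hL]
    rw [min_add_add_right]
    have h := congrFun (congrFun hX u) i
    simp only [heatF] at h
    rw [h]
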